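/- For all integers a, b with 0 ≤ b ≤ a, one has C(a,b) = Σ_{k=0}^{b} C(a−b+k, k) · C(a−b+1, a−2b+2k+1), where a binomial coefficient C(m, j) is understood to be 0 whenever j < 0 or j > m. -/
import Mathlib
open Finset

private def auxF (n b : ℕ) : ℕ :=
  ∑ k ∈ Finset.range (b + 1),
    if 2 * k ≤ b then (n + k).choose k * (n + 1).choose (b - 2 * k) else 0

private def auxG (n b : ℕ) : ℕ :=
  ∑ k ∈ Finset.range (b + 1),
    if 2 * k ≤ b then (n + 1 + k).choose k * (n + 1).choose (b - 2 * k) else 0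

private lemma trunc (g : ℕ → ℕ) (b m : ℕ) (h : b < m) :
    ∑ k ∈ Finset.range m, (if 2 * k ≤ b then g k else 0)
      = ∑ k ∈ Finset.range (b + 1), (if 2 * k ≤ b then g k else 0) := by
  symm
  apply Finset.sum_subset (Finset.range_subset_range.2 (by omega))
  intro x hx hx'
  simp only [Finset.mem_range] at hx hx'
  rw [if_neg (by omega)]

private lemma auxG_rec (n b : ℕ) : auxG n (b + 2) = auxF n (b + 2) + auxG n b := by
  have key : ∀ k : ℕ,
      (if 2 * (k + 1) ≤ b + 2 then (n + 1 + (k + 1)).choose (k + 1) * (n + 1).choose (b + 2 - 2 * (k + 1)) else 0)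
      = (if 2 * k ≤ b then (n + 1 + k).choose k * (n + 1).choose (b - 2 * k) else 0)
        + (if 2 * (k + 1) ≤ b + 2 then (n + (k + 1)).choose (k + 1) * (n + 1).choose (b + 2 - 2 * (k + 1)) else 0) := by
    intro k
    by_cases h2 : 2 * k ≤ b
    · rw [if_pos (by omega), if_pos h2, if_pos (by omega)]
      have hc : n + 1 + (k + 1) = (n + 1 + k) + 1 := by ring
      have hb : b + 2 - 2 * (k + 1) = b - 2 * k := by omega
      have hc2 : n + (k + 1) = n + 1 + k := by ring
      rw [hb, hc, Nat.choose_succ_succ (n + 1 + k) k, hc2]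
      ring
    · rw [if_neg (by omega), if_neg h2, if_neg (by omega)]
  have hG : auxG n (b + 2) =
      ((∑ k ∈ Finset.range (b + 2),
          if 2 * k ≤ b then (n + 1 + k).choose k * (n + 1).choose (b - 2 * k) else 0)
        + (∑ k ∈ Finset.range (b + 2),
          if 2 * (k + 1) ≤ b + 2 then (n + (k + 1)).choose (k + 1) * (n + 1).choose (b + 2 - 2 * (k + 1)) else 0))
        + (n + 1).choose (b + 2) := by
    unfold auxG
    rw [Finset.sum_range_succ' (n := b + 2)]
    rw [Finset.sum_congr rfl (fun k _ => key k), Finset.sum_add_distrib]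
    norm_num
  have hF : auxF n (b + 2) =
      (∑ k ∈ Finset.range (b + 2),
          if 2 * (k + 1) ≤ b + 2 then (n + (k + 1)).choose (k + 1) * (n + 1).choose (b + 2 - 2 * (k + 1)) else 0)
        + (n + 1).choose (b + 2) := by
    unfold auxF
    rw [Finset.sum_range_succ' (n := b + 2)]
    norm_num
  have t1 : (∑ k ∈ Finset.range (b + 2),
      if 2 * k ≤ b then (n + 1 + k).choose k * (n + 1).choose (b - 2 * k) else 0)
      = auxG n b := by
    unfold auxG
    exact trunc _ b (b + 2) (by omega)
  rw [hG, hF, t1]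
  ring

private lemma auxF_rec (n b : ℕ) : auxF (n + 1) (b + 1) = auxG n (b + 1) + auxG n b := by
  have key : ∀ k : ℕ,
      (if 2 * k ≤ b + 1 then (n + 1 + k).choose k * (n + 2).choose (b + 1 - 2 * k) else 0)
      = (if 2 * k ≤ b + 1 then (n + 1 + k).choose k * (n + 1).choose (b + 1 - 2 * k) else 0)
        + (if 2 * k ≤ b then (n + 1 + k).choose k * (n + 1).choose (b - 2 * k) else 0) := by
    intro k
    by_cases h2 : 2 * k ≤ b
    · rw [if_pos (by omega), if_pos (by omega), if_pos h2]
      have hb : b + 1 - 2 * k = (b - 2 * k) + 1 := by omega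
      rw [hb, Nat.choose_succ_succ (n + 1) (b - 2 * k)]
      ring
    · by_cases h3 : 2 * k ≤ b + 1
      · rw [if_pos h3, if_pos h3, if_neg h2]
        have hb : b + 1 - 2 * k = 0 := by omega
        rw [hb]
        simp
      · rw [if_neg h3, if_neg h3, if_neg h2]
  have step : auxF (n + 1) (b + 1) =
      auxG n (b + 1) + ∑ k ∈ Finset.range (b + 2),
        (if 2 * k ≤ b then (n + 1 + k).choose k * (n + 1).choose (b - 2 * k) else 0) := by
    unfold auxF auxG
    calc (∑ k ∈ Finset.range (b + 2),
        if 2 * k ≤ b + 1 then (n + 1 + k).choose k * (n + 1 + 1).choose (b + 1 - 2 * k) else 0)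
        = ∑ k ∈ Finset.range (b + 2),
          ((if 2 * k ≤ b + 1 then (n + 1 + k).choose k * (n + 1).choose (b + 1 - 2 * k) else 0)
            + (if 2 * k ≤ b then (n + 1 + k).choose k * (n + 1).choose (b - 2 * k) else 0)) := by
          refine Finset.sum_congr rfl fun k _ => ?_
          have := key k
          convert this using 3 <;> omega
      _ = _ := by rw [Finset.sum_add_distrib]
  rw [step, trunc _ b (b + 2) (by omega)]
  rfl

private lemma auxF_zero (b : ℕ) : auxF 0 b = 1 := by
  unfold auxF
  rw [Finset.sum_eq_single_of_mem (b / 2) (Finset.mem_range.2 (by omega))]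
  · rw [if_pos (by omega)]
    have h1 : b - 2 * (b / 2) = b % 2 := by omega
    rw [h1]
    rcases Nat.mod_two_eq_zero_or_one b with h | h <;> simp [h]
  · intro k _ hk
    by_cases h2 : 2 * k ≤ b
    · rw [if_pos h2, Nat.choose_eq_zero_of_lt (by omega : 1 < b - 2 * k), mul_zero]
    · rw [if_neg h2]

private lemma auxG_zero (n : ℕ) : auxG n 0 = 1 := by simp [auxG]

private lemma auxG_one (n : ℕ) : auxG n 1 = n + 1 := by
  unfold auxG
  rw [Finset.sum_range_succ, Finset.sum_range_one]
  norm_num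

private lemma auxS (n : ℕ) (hF : ∀ b, auxF n b = (n + b).choose b) :
    ∀ b, auxG n (b + 1) + auxG n b = (n + b + 2).choose (b + 1) := by
  intro b
  induction b with
  | zero =>
    rw [auxG_one, auxG_zero, Nat.choose_one_right]
  | succ b ih =>
    rw [auxG_rec n b, hF (b + 2)]
    have hp : (n + b + 2 + 1).choose (b + 2)
        = (n + b + 2).choose (b + 1) + (n + b + 2).choose (b + 2) := by
      have h := Nat.choose_succ_succ (n + b + 2) (b + 1)
      simpa [Nat.succ_eq_add_one, show b + 1 + 1 = b + 2 by ring] using h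
    have e1 : n + (b + 2) = n + b + 2 := by ring
    have e2 : n + (b + 1) + 2 = n + b + 2 + 1 := by ring
    rw [e1] at *
    rw [e2, show b + 1 + 1 = b + 2 by ring]
    omega

private lemma auxF_eq : ∀ n b, auxF n b = (n + b).choose b := by
  intro n
  induction n with
  | zero =>
    intro b
    rw [auxF_zero, Nat.zero_add, Nat.choose_self]
  | succ n ih =>
    intro b
    cases b with
    | zero => simp [auxF]
    | succ b =>
      rw [auxF_rec, auxS n ih b, show n + 1 + (b + 1) = n + b + 2 by ring]

/-- For `0 ≤ b ≤ a` one has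
`C(a,b) = Σ_{k=0}^{b} C(a-b+k, k) · C(a-b+1, a-2b+2k+1)`, where a binomial
coefficient is understood to be `0` whenever its lower index is negative or
exceeds its upper index. -/
theorem binomial_sum_identity (a b : ℕ) (hba : b ≤ a) :
    a.choose b =
      ∑ k ∈ Finset.range (b + 1),
        (a - b + k).choose k *
          (if ((a : ℤ) - 2 * b + 2 * k + 1) < 0 then 0
           else (a - b + 1).choose ((a : ℤ) - 2 * b + 2 * k + 1).toNat) := by
  obtain ⟨n, rfl⟩ : ∃ n, a = n + b := ⟨a - b, by omega⟩
  rw [← auxF_eq n b]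
  unfold auxF
  refine Finset.sum_congr rfl fun k hk => ?_
  simp only [Finset.mem_range] at hk
  have hnb : n + b - b = n := by omega
  rw [hnb]
  push_cast
  by_cases h1 : ((n : ℤ) + b - 2 * b + 2 * k + 1) < 0
  · rw [if_pos h1, if_pos (show 2 * k ≤ b by omega),
      Nat.choose_eq_zero_of_lt (show n + 1 < b - 2 * k by omega), mul_zero]
  · rw [if_neg h1]
    have ht : ((n : ℤ) + b - 2 * b + 2 * k + 1).toNat = n + 2 * k + 1 - b := by omega
    rw [ht]
    by_cases h2 : 2 * k ≤ b
    · rw [if_pos h2]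
      congr 1
      rw [show n + 2 * k + 1 - b = (n + 1) - (b - 2 * k) by omega]
      exact (Nat.choose_symm (show b - 2 * k ≤ n + 1 by omega)).symm
    · rw [if_neg h2,
        Nat.choose_eq_zero_of_lt (show n + 1 < n + 2 * k + 1 - b by omega), mul_zero]
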